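/- Let $n, k \in \mathbb{Z}$ with $k < n$, let $B_k$ be the ball of radius $2^{-k}$ centered at the origin, and for a ball $B$ let $\mathcal{I}(B, n)$ denote the union over all dyadic cubes $Q$ of side length $2^{-n}$ meeting the boundary $\partial B$ of the sets $B \cap Q$. Define $M_{k,n} u(x) = \frac{1}{|B_k|} \int_{\mathcal{I}(x+B_k, n)} u(y)\, dy$. Then for $1 \leq p \leq \infty$ and $u \in L^p(\mathbb{R}^d)$, $\|M_{k,n} u\|_{L^p} \leq C_d\, 2^{k-n} \|u\|_{L^p}$ with $C_d$ depending only on $d$. -/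

import Mathlib

open MeasureTheory
open scoped ENNReal

/-- The dyadic cube of side length `2^(-n)` containing `x`. -/
def dyadicCubeOf (d : ℕ) (n : ℤ) (x : EuclideanSpace ℝ (Fin d)) :
    Set (EuclideanSpace ℝ (Fin d)) :=
  {y | ∀ i, ⌊(2:ℝ) ^ n * y i⌋ = ⌊(2:ℝ) ^ n * x i⌋}

/-- `𝓘(x + B_k, n)`: the union, over all dyadic cubes `Q` of side length `2^(-n)`
meeting the boundary sphere of `x + B_k`, of the sets `(x + B_k) ∩ Q`. -/
def boundaryPiece (d : ℕ) (k n : ℤ) (x : EuclideanSpace ℝ (Fin d)) :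
    Set (EuclideanSpace ℝ (Fin d)) :=
  {y | y ∈ Metric.ball x ((2:ℝ) ^ (-k)) ∧
    (dyadicCubeOf d n y ∩ Metric.sphere x ((2:ℝ) ^ (-k))).Nonempty}

/-- `M_{k,n} u (x) = |B_k|⁻¹ ∫_{𝓘(x+B_k,n)} u`. -/
noncomputable def Mkn (d : ℕ) (k n : ℤ) (u : EuclideanSpace ℝ (Fin d) → ℝ)
    (x : EuclideanSpace ℝ (Fin d)) : ℝ :=
  ((volume (Metric.ball (0 : EuclideanSpace ℝ (Fin d)) ((2:ℝ) ^ (-k)))).toReal)⁻¹ *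
    ∫ y in boundaryPiece d k n x, u y

open Metric

section Aux

/-- Two points of the same dyadic cube of scale `n` are at distance at most `√d 2⁻ⁿ`. -/
lemma cube_dist {d : ℕ} {n : ℤ} {y w : EuclideanSpace ℝ (Fin d)}
    (h : ∀ i, ⌊(2:ℝ) ^ n * w i⌋ = ⌊(2:ℝ) ^ n * y i⌋) :
    dist y w ≤ Real.sqrt d * 2 ^ (-n) := by
  have h2 : (0:ℝ) < 2 ^ n := by positivity
  have key : ∀ i, (y i - w i) ^ 2 ≤ ((2:ℝ) ^ (-n)) ^ 2 := by
    intro i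
    have h1 : |2 ^ n * y i - 2 ^ n * w i| < 1 := Int.abs_sub_lt_one_of_floor_eq_floor (h i).symm
    have h3 : |y i - w i| ≤ 2 ^ (-n) := by
      rw [← mul_sub, abs_mul, abs_of_pos h2] at h1
      rw [zpow_neg]
      calc |y i - w i| = (2 ^ n * |y i - w i|) / 2 ^ n := by field_simp
        _ ≤ 1 / 2 ^ n := by gcongr
        _ = ((2:ℝ) ^ n)⁻¹ := one_div _
    have := abs_nonneg (y i - w i)
    nlinarith [sq_abs (y i - w i)]
  have hd : dist y w = Real.sqrt (∑ i, (y i - w i) ^ 2) := by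
    rw [EuclideanSpace.dist_eq]
    congr 1
    exact Finset.sum_congr rfl fun i _ => by rw [Real.dist_eq, sq_abs]
  rw [hd]
  calc Real.sqrt (∑ i, (y i - w i) ^ 2) ≤ Real.sqrt (∑ _i : Fin d, ((2:ℝ) ^ (-n)) ^ 2) :=
        Real.sqrt_le_sqrt (Finset.sum_le_sum fun i _ => key i)
    _ = Real.sqrt (d * ((2:ℝ) ^ (-n)) ^ 2) := by simp [Finset.sum_const, mul_comm]
    _ = Real.sqrt d * 2 ^ (-n) := by
        rw [Real.sqrt_mul (by positivity), Real.sqrt_sq (by positivity)]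

/-- `boundaryPiece` is contained in an annulus of width `√d 2⁻ⁿ`. -/
lemma boundaryPiece_subset (d : ℕ) (k n : ℤ) (x : EuclideanSpace ℝ (Fin d)) :
    boundaryPiece d k n x
      ⊆ ball x ((2:ℝ) ^ (-k)) \ ball x ((2:ℝ) ^ (-k) - Real.sqrt d * 2 ^ (-n)) := by
  rintro y ⟨hy, w, hw, hws⟩
  refine ⟨hy, ?_⟩
  rw [mem_ball, not_lt]
  have h1 : dist y w ≤ Real.sqrt d * 2 ^ (-n) := cube_dist hw
  have h2 : dist w x = 2 ^ (-k) := hws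
  have := dist_triangle w y x
  rw [dist_comm w y] at this
  linarith

lemma pow_sub_pow_le {r s δ : ℝ} (d : ℕ) (hr : 0 < r) (hs : 0 ≤ s) (hsr : s ≤ r)
    (hδ : r - s ≤ δ) : r ^ d - s ^ d ≤ d * δ * r ^ (d - 1) := by
  have hgeom : (∑ i ∈ Finset.range d, r ^ i * s ^ (d - 1 - i)) * (r - s) = r ^ d - s ^ d :=
    geom_sum₂_mul r s d
  have hsum : (∑ i ∈ Finset.range d, r ^ i * s ^ (d - 1 - i)) ≤ d * r ^ (d - 1) := by
    calc (∑ i ∈ Finset.range d, r ^ i * s ^ (d - 1 - i))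
        ≤ ∑ i ∈ Finset.range d, r ^ (d-1) := by
          refine Finset.sum_le_sum fun i hi => ?_
          have hi' : i < d := Finset.mem_range.mp hi
          calc r ^ i * s ^ (d - 1 - i) ≤ r ^ i * r ^ (d - 1 - i) := by
                gcongr
            _ = r ^ (i + (d - 1 - i)) := (pow_add r i _).symm
            _ = r ^ (d - 1) := by congr 1; omega
      _ = d * r ^ (d - 1) := by simp [Finset.sum_const, mul_comm]
  have h0 : 0 ≤ ∑ i ∈ Finset.range d, r ^ i * s ^ (d - 1 - i) :=
    Finset.sum_nonneg fun i _ => by positivity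
  nlinarith [pow_nonneg hr.le (d-1)]

/-- Volume bound for the annulus. -/
lemma annulus_vol {d : ℕ} {r δ : ℝ} (hr : 0 < r) (hδ : 0 ≤ δ) (hd : d ≠ 0 ∨ δ = 0)
    (x : EuclideanSpace ℝ (Fin d)) :
    volume (ball x r \ ball x (r - δ)) ≤
      ENNReal.ofReal (d * δ * r ^ (d - 1)) * volume (ball (0 : EuclideanSpace ℝ (Fin d)) 1) := by
  rcases hd with hd | hδ0
  · set s : ℝ := max (r - δ) 0 with hs
    have hs0 : 0 ≤ s := le_max_right _ _
    have hsr : s ≤ r := max_le (by linarith) hr.le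
    have hrs : r - s ≤ δ := by rw [hs]; rcases le_total (r - δ) 0 with h | h <;>
      [rw [max_eq_right h]; rw [max_eq_left h]] <;> linarith
    have hball : volume (ball x (r - δ)) = ENNReal.ofReal (s ^ d) *
        volume (ball (0 : EuclideanSpace ℝ (Fin d)) 1) := by
      rcases le_or_gt (r - δ) 0 with h | h
      · rw [ball_eq_empty.mpr h, measure_empty, hs, max_eq_right h,
          zero_pow hd, ENNReal.ofReal_zero, zero_mul]
      · rw [Measure.addHaar_ball_of_pos _ _ h, finrank_euclideanSpace_fin, hs, max_eq_left h.le]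
    have hballr : volume (ball x r) = ENNReal.ofReal (r ^ d) *
        volume (ball (0 : EuclideanSpace ℝ (Fin d)) 1) := by
      rw [Measure.addHaar_ball_of_pos _ _ hr, finrank_euclideanSpace_fin]
    have hdiff : volume (ball x r \ ball x (r - δ)) =
        volume (ball x r) - volume (ball x (r - δ)) :=
      measure_diff (ball_subset_ball (by linarith)) measurableSet_ball.nullMeasurableSet
        measure_ball_lt_top.ne
    rw [hdiff]
    rw [hballr, hball]
    rw [tsub_le_iff_right, ← add_mul, ← ENNReal.ofReal_add (by positivity) (by positivity)]
    refine mul_le_mul_left (ENNReal.ofReal_le_ofReal ?_) _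
    have := pow_sub_pow_le d hr hs0 hsr hrs
    linarith
  · subst hδ0
    simp

/-- The `Lᵖ` bound for the averaging operator, at the level of lintegrals. -/
lemma core_lp {d : ℕ} {A : Set (EuclideanSpace ℝ (Fin d))}
    (hAfin : volume A ≠ ∞) {f : EuclideanSpace ℝ (Fin d) → ℝ≥0∞} (hf : Measurable f)
    {q : ℝ} (hq : 1 ≤ q) :
    ∫⁻ x, (∫⁻ z in A, f (x + z)) ^ q ≤ volume A ^ q * ∫⁻ x, f x ^ q := by
  have hq0 : 0 < q := lt_of_lt_of_le one_pos hq
  have hmeas : Measurable fun p : (EuclideanSpace ℝ (Fin d)) × (EuclideanSpace ℝ (Fin d)) =>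
      f (p.1 + p.2) ^ q := (hf.comp (measurable_fst.add measurable_snd)).pow_const q
  have hswap : ∫⁻ x, ∫⁻ z in A, f (x + z) ^ q = ∫⁻ z in A, ∫⁻ x, f (x + z) ^ q := by
    exact lintegral_lintegral_swap hmeas.aemeasurable
  have htrans : ∀ z, ∫⁻ x, f (x + z) ^ q = ∫⁻ x, f x ^ q := fun z =>
    lintegral_add_right_eq_self (fun x => f x ^ q) z
  have hinner : ∫⁻ z in A, ∫⁻ x, f (x + z) ^ q = volume A * ∫⁻ x, f x ^ q := by
    simp_rw [htrans]
    rw [setLIntegral_const, mul_comm]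
  rcases eq_or_lt_of_le hq with rfl | hq1
  · simp only [ENNReal.rpow_one] at hswap hinner ⊢
    exact le_of_eq (hswap.trans hinner)
  · -- q > 1
    rcases eq_or_ne (volume A) 0 with hA0 | hA0
    · have : ∀ x, (∫⁻ z in A, f (x + z)) = 0 := fun x => by
        rw [setLIntegral_measure_zero _ _ hA0]
      simp_rw [this, ENNReal.zero_rpow_of_pos hq0, lintegral_zero]
      exact zero_le
    · have hcj : q.HolderConjugate (q / (q - 1)) := Real.HolderConjugate.conjExponent hq1
      have step1 : ∀ x, (∫⁻ z in A, f (x + z)) ^ q ≤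
          volume A ^ (q - 1) * ∫⁻ z in A, f (x + z) ^ q := by
        intro x
        have hH := ENNReal.lintegral_mul_le_Lp_mul_Lq (volume.restrict A) hcj
          ((hf.comp (measurable_const_add x)).aemeasurable) aemeasurable_const
          (f := fun z => f (x + z)) (g := fun _ => 1)
        simp only [Pi.mul_apply, mul_one, one_mul, ENNReal.one_rpow, lintegral_const,
          Measure.restrict_apply, MeasurableSet.univ, Set.univ_inter] at hH
        have := ENNReal.rpow_le_rpow hH hq0.le
        rw [ENNReal.mul_rpow_of_nonneg _ _ hq0.le, ← ENNReal.rpow_mul, ← ENNReal.rpow_mul,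
          one_div_mul_cancel hq0.ne', ENNReal.rpow_one] at this
        calc (∫⁻ z in A, f (x + z)) ^ q ≤
            (∫⁻ z in A, f (x + z) ^ q) * volume A ^ (1 / (q / (q - 1)) * q) := this
          _ = volume A ^ (q - 1) * ∫⁻ z in A, f (x + z) ^ q := by
              rw [mul_comm]; congr 2
              field_simp
      calc ∫⁻ x, (∫⁻ z in A, f (x + z)) ^ q
          ≤ ∫⁻ x, volume A ^ (q - 1) * ∫⁻ z in A, f (x + z) ^ q := lintegral_mono step1
        _ = volume A ^ (q - 1) * ∫⁻ x, ∫⁻ z in A, f (x + z) ^ q := by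
            rw [lintegral_const_mul' _ _ (ENNReal.rpow_ne_top_of_nonneg (by linarith) hAfin)]
        _ = volume A ^ (q - 1) * (volume A * ∫⁻ x, f x ^ q) := by rw [hswap, hinner]
        _ = volume A ^ q * ∫⁻ x, f x ^ q := by
            rw [← mul_assoc]
            congr 1
            calc volume A ^ (q - 1) * volume A
                = volume A ^ (q - 1) * volume A ^ (1:ℝ) := by rw [ENNReal.rpow_one]
              _ = volume A ^ q := by
                  rw [← ENNReal.rpow_add_of_nonneg _ _ (by linarith) zero_le_one]
                  norm_num

end Aux

/-- For `k < n` and `1 ≤ p ≤ ∞`, `‖M_{k,n} u‖_p ≤ C_d 2^{k-n} ‖u‖_p`. -/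
theorem Mkn_norm_le (d : ℕ) :
    ∃ C : ℝ, 0 < C ∧ ∀ (k n : ℤ), k < n → ∀ (p : ℝ≥0∞), 1 ≤ p →
      ∀ u : EuclideanSpace ℝ (Fin d) → ℝ, MemLp u p volume →
      eLpNorm (Mkn d k n u) p volume
        ≤ ENNReal.ofReal (C * (2:ℝ) ^ (k - n)) * eLpNorm u p volume := by
  refine ⟨d * Real.sqrt d + 1, by positivity, ?_⟩
  intro k n hkn p hp u hu
  have hp0 : p ≠ 0 := (lt_of_lt_of_le zero_lt_one hp).ne'
  set r : ℝ := 2 ^ (-k) with hrdef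
  set δ : ℝ := Real.sqrt d * 2 ^ (-n) with hδdef
  have hr : 0 < r := by positivity
  have hδ0 : 0 ≤ δ := by positivity
  set A : Set (EuclideanSpace ℝ (Fin d)) := ball (0 : EuclideanSpace ℝ (Fin d)) r
      \ ball 0 (r - δ) with hAdef
  have hAfin : volume A ≠ ∞ :=
    ((measure_mono Set.diff_subset).trans_lt measure_ball_lt_top).ne
  set V := volume (ball (0 : EuclideanSpace ℝ (Fin d)) r) with hVdef
  have hV0 : V ≠ 0 := (measure_ball_pos _ _ hr).ne'
  have hVtop : V ≠ ∞ := measure_ball_lt_top.ne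
  -- the constant bound
  have hconst : V⁻¹ * volume A ≤ ENNReal.ofReal ((d * Real.sqrt d + 1) * 2 ^ (k - n)) := by
    have hd : d ≠ 0 ∨ δ = 0 := by
      rcases Nat.eq_zero_or_pos d with hd0 | hd0
      · right; rw [hδdef, hd0]; simp
      · left; omega
    have hannulus := annulus_vol hr hδ0 hd (0 : EuclideanSpace ℝ (Fin d))
    set b := volume (ball (0 : EuclideanSpace ℝ (Fin d)) 1) with hbdef
    have hb0 : b ≠ 0 := (measure_ball_pos _ _ one_pos).ne'
    have hbtop : b ≠ ∞ := measure_ball_lt_top.ne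
    have hVeq : V = ENNReal.ofReal (r ^ d) * b := by
      rw [hVdef, Measure.addHaar_ball_of_pos _ _ hr, finrank_euclideanSpace_fin]
    have ha0 : ENNReal.ofReal (r ^ d) ≠ 0 := by
      simp only [ne_eq, ENNReal.ofReal_eq_zero, not_le]; positivity
    have hatop : ENNReal.ofReal (r ^ d) ≠ ∞ := ENNReal.ofReal_ne_top
    have hreal : d * δ * r ^ (d - 1) ≤ ((d * Real.sqrt d + 1) * 2 ^ (k - n)) * r ^ d := by
      rcases Nat.eq_zero_or_pos d with hd0 | hd0
      · subst hd0
        simp only [Nat.cast_zero, zero_mul]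
        positivity
      · have hrd : r ^ d = r ^ (d - 1) * r := by
          rw [← pow_succ]; congr 1; omega
        have h2 : (2:ℝ) ^ (k - n) * r = 2 ^ (-n) := by
          rw [hrdef, ← zpow_add₀ (by norm_num : (2:ℝ) ≠ 0)]
          congr 1; ring
        have hpos : (0:ℝ) ≤ 2 ^ (-n : ℤ) * r ^ (d - 1) := by positivity
        calc (d:ℝ) * δ * r ^ (d - 1) = (d * Real.sqrt d) * (2 ^ (-n:ℤ) * r ^ (d - 1)) := by
              rw [hδdef]; ring
          _ ≤ (d * Real.sqrt d + 1) * (2 ^ (-n:ℤ) * r ^ (d - 1)) := by nlinarith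
          _ = ((d * Real.sqrt d + 1) * 2 ^ (k - n)) * r ^ d := by rw [hrd, ← h2]; ring
    calc V⁻¹ * volume A
        ≤ (ENNReal.ofReal (r ^ d) * b)⁻¹ * (ENNReal.ofReal (d * δ * r ^ (d - 1)) * b) := by
          rw [← hVeq]; exact mul_le_mul_right hannulus _
      _ = (ENNReal.ofReal (r ^ d))⁻¹ * ENNReal.ofReal (d * δ * r ^ (d - 1)) * (b⁻¹ * b) := by
          rw [ENNReal.mul_inv (Or.inl ha0) (Or.inl hatop)]; ring
      _ = (ENNReal.ofReal (r ^ d))⁻¹ * ENNReal.ofReal (d * δ * r ^ (d - 1)) := by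
          rw [ENNReal.inv_mul_cancel hb0 hbtop, mul_one]
      _ ≤ (ENNReal.ofReal (r ^ d))⁻¹ *
            (ENNReal.ofReal ((d * Real.sqrt d + 1) * 2 ^ (k - n)) * ENNReal.ofReal (r ^ d)) := by
          refine mul_le_mul_right ?_ _
          rw [← ENNReal.ofReal_mul (by positivity)]
          exact ENNReal.ofReal_le_ofReal hreal
      _ = ENNReal.ofReal ((d * Real.sqrt d + 1) * 2 ^ (k - n)) *
            ((ENNReal.ofReal (r ^ d))⁻¹ * ENNReal.ofReal (r ^ d)) := by ring
      _ = ENNReal.ofReal ((d * Real.sqrt d + 1) * 2 ^ (k - n)) := by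
          rw [ENNReal.inv_mul_cancel ha0 hatop, mul_one]
  -- measurable representative
  set v := hu.aestronglyMeasurable.mk u with hvdef
  have hv : StronglyMeasurable v := hu.aestronglyMeasurable.stronglyMeasurable_mk
  have huv : u =ᵐ[volume] v := hu.aestronglyMeasurable.ae_eq_mk
  set f : EuclideanSpace ℝ (Fin d) → ℝ≥0∞ := fun y => (‖v y‖₊ : ℝ≥0∞) with hfdef
  have hfmeas : Measurable f := hv.measurable.nnnorm.coe_nnreal_ennreal
  -- translation identity
  have himg : ∀ x : EuclideanSpace ℝ (Fin d),
      (fun z => x + z) '' A = ball x r \ ball x (r - δ) := by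
    intro x
    have hdz : ∀ z : EuclideanSpace ℝ (Fin d), dist (x + z) x = dist z 0 := fun z => by
      rw [dist_eq_norm, dist_zero_right]; congr 1; abel
    ext y
    simp only [hAdef, Set.mem_image, Set.mem_diff, mem_ball]
    constructor
    · rintro ⟨z, ⟨h1, h2⟩, rfl⟩
      rw [hdz]; exact ⟨h1, h2⟩
    · rintro ⟨h1, h2⟩
      refine ⟨y - x, ?_, by abel⟩
      have h3 : dist (y - x) (0 : EuclideanSpace ℝ (Fin d)) = dist y x := by
        rw [dist_zero_right, dist_eq_norm]
      rw [h3]; exact ⟨h1, h2⟩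
  have htrans : ∀ (x : EuclideanSpace ℝ (Fin d)),
      ∫⁻ z in A, f (x + z) = ∫⁻ y in ball x r \ ball x (r - δ), f y := fun x => by
    rw [← himg x]
    exact (measurePreserving_add_left volume x).setLIntegral_comp_emb
      (MeasurableEquiv.addLeft x).measurableEmbedding f A
  -- pointwise bound
  have hpt : ∀ x, (‖Mkn d k n u x‖₊ : ℝ≥0∞) ≤ V⁻¹ * ∫⁻ z in A, f (x + z) := by
    intro x
    have h1 : (‖Mkn d k n u x‖₊ : ℝ≥0∞) =
        V⁻¹ * ‖∫ y in boundaryPiece d k n x, u y‖₊ := by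
      simp only [Mkn, ← hrdef, ← hVdef]
      rw [nnnorm_mul, ENNReal.coe_mul]
      congr 1
      rw [show (‖V.toReal⁻¹‖₊ : ℝ≥0∞) = ‖V.toReal⁻¹‖ₑ from rfl, Real.enorm_eq_ofReal (by positivity),
        ENNReal.ofReal_inv_of_pos (ENNReal.toReal_pos hV0 hVtop), ENNReal.ofReal_toReal hVtop]
    rw [h1]
    refine mul_le_mul_right ?_ _
    calc (‖∫ y in boundaryPiece d k n x, u y‖₊ : ℝ≥0∞)
        ≤ ∫⁻ y in boundaryPiece d k n x, ‖u y‖₊ := enorm_integral_le_lintegral_enorm _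
      _ ≤ ∫⁻ y in ball x r \ ball x (r - δ), ‖u y‖₊ := by
          refine lintegral_mono_set ?_
          have := boundaryPiece_subset d k n x
          rw [← hrdef, ← hδdef] at this
          exact this
      _ = ∫⁻ y in ball x r \ ball x (r - δ), f y :=
          lintegral_congr_ae (ae_restrict_of_ae (huv.mono fun y hy => by
            simp only [hfdef, hy]))
      _ = ∫⁻ z in A, f (x + z) := (htrans x).symm
  by_cases hptop : p = ∞
  · subst hptop
    rw [eLpNorm_exponent_top, eLpNorm_exponent_top]
    have hC : ∀ x, (∫⁻ z in A, f (x + z)) ≤ volume A * eLpNormEssSup u volume := by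
      intro x
      have hae : ∀ᵐ y ∂(volume : Measure (EuclideanSpace ℝ (Fin d))),
          (‖v y‖₊ : ℝ≥0∞) ≤ eLpNormEssSup u volume := by
        have h1 : eLpNormEssSup v volume = eLpNormEssSup u volume :=
          eLpNormEssSup_congr_ae huv.symm
        rw [← h1]
        exact ae_le_eLpNormEssSup
      have hae2 : ∀ᵐ z ∂(volume : Measure (EuclideanSpace ℝ (Fin d))),
          f (x + z) ≤ eLpNormEssSup u volume :=
        (measurePreserving_add_left volume x).quasiMeasurePreserving.ae hae
      calc ∫⁻ z in A, f (x + z) ≤ ∫⁻ _z in A, eLpNormEssSup u volume :=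
            lintegral_mono_ae (ae_restrict_of_ae hae2)
        _ = eLpNormEssSup u volume * volume A := setLIntegral_const _ _
        _ = volume A * eLpNormEssSup u volume := mul_comm _ _
    have hbd : ∀ x, (‖Mkn d k n u x‖₊ : ℝ≥0∞) ≤
        ENNReal.ofReal ((d * Real.sqrt d + 1) * 2 ^ (k - n)) * eLpNormEssSup u volume := by
      intro x
      calc (‖Mkn d k n u x‖₊ : ℝ≥0∞) ≤ V⁻¹ * ∫⁻ z in A, f (x + z) := hpt x
        _ ≤ V⁻¹ * (volume A * eLpNormEssSup u volume) := mul_le_mul_right (hC x) _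
        _ = (V⁻¹ * volume A) * eLpNormEssSup u volume := (mul_assoc _ _ _).symm
        _ ≤ _ := mul_le_mul_left hconst _
    exact essSup_le_of_ae_le _ (ae_of_all _ hbd)
  · have hq1 : (1:ℝ) ≤ p.toReal := by
      rw [← ENNReal.toReal_one]
      exact ENNReal.toReal_mono hptop hp
    rw [eLpNorm_eq_lintegral_rpow_enorm_toReal hp0 hptop, eLpNorm_eq_lintegral_rpow_enorm_toReal hp0 hptop]
    set q := p.toReal with hqdef
    have hq0 : (0:ℝ) < q := lt_of_lt_of_le one_pos hq1
    have hIu : ∫⁻ x, (‖u x‖₊ : ℝ≥0∞) ^ q = ∫⁻ x, f x ^ q :=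
      lintegral_congr_ae (huv.mono fun y hy => by simp only [hfdef, hy])
    have key : ∫⁻ x, (‖Mkn d k n u x‖₊ : ℝ≥0∞) ^ q
        ≤ V⁻¹ ^ q * (volume A ^ q * ∫⁻ x, f x ^ q) := by
      calc ∫⁻ x, (‖Mkn d k n u x‖₊ : ℝ≥0∞) ^ q
          ≤ ∫⁻ x, (V⁻¹ * ∫⁻ z in A, f (x + z)) ^ q :=
            lintegral_mono fun x => ENNReal.rpow_le_rpow (hpt x) hq0.le
        _ = ∫⁻ x, V⁻¹ ^ q * (∫⁻ z in A, f (x + z)) ^ q := by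
            simp_rw [ENNReal.mul_rpow_of_nonneg _ _ hq0.le]
        _ = V⁻¹ ^ q * ∫⁻ x, (∫⁻ z in A, f (x + z)) ^ q :=
            lintegral_const_mul' _ _
              (ENNReal.rpow_ne_top_of_nonneg hq0.le (ENNReal.inv_ne_top.mpr hV0))
        _ ≤ V⁻¹ ^ q * (volume A ^ q * ∫⁻ x, f x ^ q) :=
            mul_le_mul_right (core_lp hAfin hfmeas hq1) _
    rw [show (∫⁻ x, ‖u x‖ₑ ^ q) = ∫⁻ x, f x ^ q from hIu]
    calc (∫⁻ x, (‖Mkn d k n u x‖₊ : ℝ≥0∞) ^ q) ^ (1/q)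
        ≤ (V⁻¹ ^ q * (volume A ^ q * ∫⁻ x, f x ^ q)) ^ (1/q) :=
          ENNReal.rpow_le_rpow key (by positivity)
      _ = (V⁻¹ * volume A) * (∫⁻ x, f x ^ q) ^ (1/q) := by
          rw [← mul_assoc, ← ENNReal.mul_rpow_of_nonneg _ _ hq0.le,
            ENNReal.mul_rpow_of_nonneg _ _ (by positivity : (0:ℝ) ≤ 1/q),
            ← ENNReal.rpow_mul, mul_one_div_cancel hq0.ne', ENNReal.rpow_one]
      _ ≤ ENNReal.ofReal ((d * Real.sqrt d + 1) * 2 ^ (k - n)) * (∫⁻ x, f x ^ q) ^ (1/q) :=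
          mul_le_mul_left hconst _
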